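/- Assume the cocycle c is real, i.e. ⟨c(S(y*)), c((S(x))*)⟩ = ⟨c(x), c(y)⟩ for all x, y ∈ A. Then c(1) = 0, and for every x ∈ A with ε(x) = 0 and every pair of finite families (pⱼ)ⱼ, (qⱼ)ⱼ in A with Δ(x*x) = Σⱼ pⱼ ⊗ qⱼ, one has Σⱼ ⟨c(pⱼ), c(S(qⱼ*))⟩ = −2‖c(x)‖². (In particular, the functional ψ defined by ψ(x) = Σᵢ ⟨c(yᵢ), c(S(zᵢ*))⟩ whenever Δx = Σᵢ yᵢ ⊗ zᵢ is normalized, ψ(1) = 0, and conditionally negative: ψ(x*x) ≤ 0 for all x in the kernel of ε.) -/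

import Mathlib

open scoped TensorProduct
open Coalgebra HopfAlgebra LinearMap

section Hopf
variable {R : Type*} {A : Type*} [CommSemiring R] [Semiring A] [HopfAlgebra R A]

lemma repr_sum_counit_right_smul_left {ι : Type*} {a : A} (r : Repr R a ι) :
    ∑ i ∈ r.index, counit (R := R) (r.right i) • r.left i = a := by
  have h := Coalgebra.sum_tmul_counit_eq r
  have := congrArg (TensorProduct.rid R A) h
  simp only [map_sum, TensorProduct.rid_tmul, one_smul] at this
  exact this

lemma repr_sum_counit_left_smul_right {ι : Type*} {a : A} (r : Repr R a ι) :
    ∑ i ∈ r.index, counit (R := R) (r.left i) • r.right i = a := by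
  have h := Coalgebra.sum_counit_tmul_eq r
  have := congrArg (TensorProduct.lid R A) h
  simp only [map_sum, TensorProduct.lid_tmul, one_smul] at this
  exact this

lemma prod_repr {ι κ : Type*} {u v : A} (ru : Repr R u ι) (rv : Repr R v κ) :
    ∑ p ∈ ru.index ×ˢ rv.index,
      (ru.left p.1 * rv.left p.2) ⊗ₜ[R] (ru.right p.1 * rv.right p.2)
      = comul (R := R) (u * v) := by
  rw [Bialgebra.comul_mul, ← ru.eq, ← rv.eq, Finset.sum_mul_sum, Finset.sum_product]
  simp [Algebra.TensorProduct.tmul_mul_tmul]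

lemma sum_mul_mul_antipode_eq {ι κ : Type*} {u v : A} (ru : Repr R u ι) (rv : Repr R v κ) :
    ∑ s ∈ ru.index, ∑ t ∈ rv.index,
      (ru.left s * rv.left t) * antipode (R := R) (ru.right s * rv.right t)
      = (counit (R := R) u * counit (R := R) v) • (1 : A) := by
  let rp : Repr R (u * v) (ι × κ) :=
    { index := ru.index ×ˢ rv.index
      left := fun p => ru.left p.1 * rv.left p.2
      right := fun p => ru.right p.1 * rv.right p.2
      eq := prod_repr ru rv }
  have := sum_mul_antipode_eq_smul (R := R) rp
  simpa [rp, Finset.sum_product, Bialgebra.counit_mul] using this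

lemma sum_antipode_mul_mul_eq {ι κ : Type*} {u v : A} (ru : Repr R u ι) (rv : Repr R v κ) :
    ∑ s ∈ ru.index, ∑ t ∈ rv.index,
      antipode (R := R) (rv.left t) * antipode (R := R) (ru.left s)
        * (ru.right s * rv.right t)
      = (counit (R := R) u * counit (R := R) v) • (1 : A) := by
  have hu := sum_antipode_mul_eq_smul (R := R) ru
  have hv := sum_antipode_mul_eq_smul (R := R) rv
  rw [Finset.sum_comm]
  have key : ∀ t ∈ rv.index, ∑ s ∈ ru.index,
      antipode (R := R) (rv.left t) * antipode (R := R) (ru.left s)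
        * (ru.right s * rv.right t)
      = counit (R := R) u • (antipode (R := R) (rv.left t) * rv.right t) := by
    intro t _
    have h1 : ∑ s ∈ ru.index,
        antipode (R := R) (rv.left t) * antipode (R := R) (ru.left s)
          * (ru.right s * rv.right t)
        = antipode (R := R) (rv.left t) *
            ((∑ s ∈ ru.index, antipode (R := R) (ru.left s) * ru.right s) * rv.right t) := by
      rw [Finset.sum_mul, Finset.mul_sum]
      exact Finset.sum_congr rfl fun s _ => by simp only [mul_assoc]
    rw [h1, hu, smul_mul_assoc, one_mul, mul_smul_comm]
  rw [Finset.sum_congr rfl key, ← Finset.smul_sum, hv, smul_smul]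

lemma sum_mul_mul_eq {ι κ μ : Type*} (f g h : A →ₗ[R] A) {a : A} (repr : Repr R a ι)
    (a₁ : (i : ι) → Repr R (repr.left i) κ) (a₂ : (i : ι) → Repr R (repr.right i) μ) :
    ∑ i ∈ repr.index, ∑ j ∈ (a₂ i).index,
      f (repr.left i) * (g ((a₂ i).left j) * h ((a₂ i).right j))
    = ∑ i ∈ repr.index, ∑ j ∈ (a₁ i).index,
      f ((a₁ i).left j) * (g ((a₁ i).right j) * h (repr.right i)) := by
  have H := Coalgebra.sum_map_tmul_tmul_eq (R := R) f g h a (repr := repr) (a₁ := a₁) (a₂ := a₂)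
  have H2 := congrArg (LinearMap.mul' R A ∘ₗ LinearMap.lTensor A (LinearMap.mul' R A)) H
  simpa [map_sum, LinearMap.mul'_apply] using H2

lemma sum4_shuffle {α β : Type*} {σ : α → Type*} {τ : β → Type*} {M : Type*} [AddCommMonoid M]
    (I : Finset α) (J : Finset β) (S : (a : α) → Finset (σ a)) (T : (b : β) → Finset (τ b))
    (F : (a : α) → σ a → (b : β) → τ b → M) :
    ∑ i ∈ I, ∑ j ∈ J, ∑ s ∈ S i, ∑ t ∈ T j, F i s j t
    = ∑ j ∈ J, ∑ t ∈ T j, ∑ i ∈ I, ∑ s ∈ S i, F i s j t := by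
  rw [Finset.sum_comm]
  refine Finset.sum_congr rfl fun j _ => ?_
  calc ∑ i ∈ I, ∑ s ∈ S i, ∑ t ∈ T j, F i s j t
      = ∑ i ∈ I, ∑ t ∈ T j, ∑ s ∈ S i, F i s j t :=
        Finset.sum_congr rfl fun i _ => Finset.sum_comm
    _ = ∑ t ∈ T j, ∑ i ∈ I, ∑ s ∈ S i, F i s j t := Finset.sum_comm

lemma sum4_swap {α β : Type*} {σ : α → Type*} {τ : β → Type*} {M : Type*} [AddCommMonoid M]
    (I : Finset α) (J : Finset β) (S : (a : α) → Finset (σ a)) (T : (b : β) → Finset (τ b))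
    (F : (a : α) → σ a → (b : β) → τ b → M) :
    ∑ i ∈ I, ∑ s ∈ S i, ∑ j ∈ J, ∑ t ∈ T j, F i s j t
    = ∑ j ∈ J, ∑ t ∈ T j, ∑ i ∈ I, ∑ s ∈ S i, F i s j t := by
  calc ∑ i ∈ I, ∑ s ∈ S i, ∑ j ∈ J, ∑ t ∈ T j, F i s j t
      = ∑ i ∈ I, ∑ j ∈ J, ∑ s ∈ S i, ∑ t ∈ T j, F i s j t :=
        Finset.sum_congr rfl fun i _ => Finset.sum_comm
    _ = _ := sum4_shuffle I J S T F

set_option maxHeartbeats 1000000 in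
theorem antipode_mul_antidistrib' (a b : A) :
    antipode (R := R) (a * b) = antipode (R := R) b * antipode (R := R) a := by
  classical
  have ra : Repr R a (A × A) := ℛ R a
  have rb : Repr R b (A × A) := ℛ R b
  have raL : (i : A × A) → Repr R (ra.left i) (A × A) := fun i => ℛ R (ra.left i)
  have raR : (i : A × A) → Repr R (ra.right i) (A × A) := fun i => ℛ R (ra.right i)
  have rbL : (j : A × A) → Repr R (rb.left j) (A × A) := fun j => ℛ R (rb.left j)
  have rbR : (j : A × A) → Repr R (rb.right j) (A × A) := fun j => ℛ R (rb.right j)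
  have h0 : a * b = ∑ i ∈ ra.index, ∑ j ∈ rb.index,
      (counit (R := R) (ra.left i) * counit (R := R) (rb.left j))
        • (ra.right i * rb.right j) := by
    conv_lhs => rw [← repr_sum_counit_left_smul_right ra, ← repr_sum_counit_left_smul_right rb]
    rw [Finset.sum_mul_sum]
    exact Finset.sum_congr rfl fun i _ => Finset.sum_congr rfl fun j _ => by
      rw [smul_mul_smul_comm]
  have h1 : antipode (R := R) (a * b) = ∑ i ∈ ra.index, ∑ j ∈ rb.index,
      ∑ s ∈ (raL i).index, ∑ t ∈ (rbL j).index,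
        (antipode (R := R) ((rbL j).left t) * antipode (R := R) ((raL i).left s)) *
          (((raL i).right s * (rbL j).right t)
            * antipode (R := R) (ra.right i * rb.right j)) := by
    rw [h0, map_sum]
    refine Finset.sum_congr rfl fun i _ => ?_
    rw [map_sum]
    refine Finset.sum_congr rfl fun j _ => ?_
    rw [map_smul]
    calc (counit (R := R) (ra.left i) * counit (R := R) (rb.left j))
          • antipode (R := R) (ra.right i * rb.right j)
        = ((counit (R := R) (ra.left i) * counit (R := R) (rb.left j)) • (1 : A))
            * antipode (R := R) (ra.right i * rb.right j) := by
          rw [smul_mul_assoc, one_mul]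
      _ = (∑ s ∈ (raL i).index, ∑ t ∈ (rbL j).index,
            antipode (R := R) ((rbL j).left t) * antipode (R := R) ((raL i).left s)
              * ((raL i).right s * (rbL j).right t))
            * antipode (R := R) (ra.right i * rb.right j) := by
          rw [sum_antipode_mul_mul_eq (raL i) (rbL j)]
      _ = _ := by
          rw [Finset.sum_mul]
          refine Finset.sum_congr rfl fun s _ => ?_
          rw [Finset.sum_mul]
          exact Finset.sum_congr rfl fun t _ => by simp only [mul_assoc]
  have h2 : antipode (R := R) (a * b) = ∑ j ∈ rb.index, ∑ t ∈ (rbL j).index,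
      ∑ i ∈ ra.index, ∑ s ∈ (raL i).index,
        (antipode (R := R) ((rbL j).left t) * antipode (R := R) ((raL i).left s)) *
          (((raL i).right s * (rbL j).right t)
            * antipode (R := R) (ra.right i * rb.right j)) := by
    rw [h1]
    exact sum4_shuffle ra.index rb.index (fun i => (raL i).index) (fun j => (rbL j).index)
      (fun i s j t => (antipode (R := R) ((rbL j).left t) * antipode (R := R) ((raL i).left s)) *
        (((raL i).right s * (rbL j).right t) * antipode (R := R) (ra.right i * rb.right j)))
  have h3 : antipode (R := R) (a * b) = ∑ j ∈ rb.index, ∑ t ∈ (rbL j).index,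
      ∑ i ∈ ra.index, ∑ s ∈ (raR i).index,
        (antipode (R := R) ((rbL j).left t) * antipode (R := R) (ra.left i)) *
          (((raR i).left s * (rbL j).right t)
            * antipode (R := R) ((raR i).right s * rb.right j)) := by
    rw [h2]
    refine Finset.sum_congr rfl fun j _ => Finset.sum_congr rfl fun t _ => ?_
    have key := (sum_mul_mul_eq
      (f := LinearMap.mulLeft R (antipode (R := R) ((rbL j).left t)) ∘ₗ antipode (R := R))
      (g := LinearMap.mulRight R ((rbL j).right t))
      (h := antipode (R := R) ∘ₗ LinearMap.mulRight R (rb.right j)) ra raL raR).symm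
    simp only [LinearMap.coe_comp, Function.comp_apply, LinearMap.mulLeft_apply,
      LinearMap.mulRight_apply] at key
    exact key
  have h4 : antipode (R := R) (a * b) = ∑ i ∈ ra.index, ∑ s ∈ (raR i).index,
      ∑ j ∈ rb.index, ∑ t ∈ (rbL j).index,
        (antipode (R := R) ((rbL j).left t) * antipode (R := R) (ra.left i)) *
          (((raR i).left s * (rbL j).right t)
            * antipode (R := R) ((raR i).right s * rb.right j)) := by
    rw [h3]
    exact (sum4_swap ra.index rb.index (fun i => (raR i).index) (fun j => (rbL j).index)
      (fun i s j t => (antipode (R := R) ((rbL j).left t) * antipode (R := R) (ra.left i)) *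
        (((raR i).left s * (rbL j).right t)
          * antipode (R := R) ((raR i).right s * rb.right j)))).symm
  have h5 : antipode (R := R) (a * b) = ∑ i ∈ ra.index, ∑ s ∈ (raR i).index,
      ∑ j ∈ rb.index, ∑ t ∈ (rbR j).index,
        (antipode (R := R) (rb.left j) * antipode (R := R) (ra.left i)) *
          (((raR i).left s * (rbR j).left t)
            * antipode (R := R) ((raR i).right s * (rbR j).right t)) := by
    rw [h4]
    refine Finset.sum_congr rfl fun i _ => Finset.sum_congr rfl fun s _ => ?_
    have key := (sum_mul_mul_eq
      (f := LinearMap.mulRight R (antipode (R := R) (ra.left i)) ∘ₗ antipode (R := R))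
      (g := LinearMap.mulLeft R ((raR i).left s))
      (h := antipode (R := R) ∘ₗ LinearMap.mulLeft R ((raR i).right s)) rb rbL rbR).symm
    simp only [LinearMap.coe_comp, Function.comp_apply, LinearMap.mulLeft_apply,
      LinearMap.mulRight_apply] at key
    exact key
  have h6 : antipode (R := R) (a * b) = ∑ i ∈ ra.index, ∑ j ∈ rb.index,
      (counit (R := R) (ra.right i) * counit (R := R) (rb.right j)) •
        (antipode (R := R) (rb.left j) * antipode (R := R) (ra.left i)) := by
    rw [h5]
    refine Finset.sum_congr rfl fun i _ => ?_
    rw [Finset.sum_comm]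
    refine Finset.sum_congr rfl fun j _ => ?_
    calc ∑ s ∈ (raR i).index, ∑ t ∈ (rbR j).index,
          (antipode (R := R) (rb.left j) * antipode (R := R) (ra.left i)) *
            (((raR i).left s * (rbR j).left t)
              * antipode (R := R) ((raR i).right s * (rbR j).right t))
        = (antipode (R := R) (rb.left j) * antipode (R := R) (ra.left i)) *
            (∑ s ∈ (raR i).index, ∑ t ∈ (rbR j).index,
              ((raR i).left s * (rbR j).left t)
                * antipode (R := R) ((raR i).right s * (rbR j).right t)) := by
          rw [Finset.mul_sum]
          exact Finset.sum_congr rfl fun s _ => by rw [Finset.mul_sum]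
      _ = _ := by
          rw [sum_mul_mul_antipode_eq (raR i) (rbR j), mul_smul_comm, mul_one]
  rw [h6]
  have hsb : antipode (R := R) b
      = ∑ j ∈ rb.index, counit (R := R) (rb.right j) • antipode (R := R) (rb.left j) := by
    conv_lhs => rw [← repr_sum_counit_right_smul_left rb]
    rw [map_sum]
    exact Finset.sum_congr rfl fun j _ => by rw [map_smul]
  have hsa : antipode (R := R) a
      = ∑ i ∈ ra.index, counit (R := R) (ra.right i) • antipode (R := R) (ra.left i) := by
    conv_lhs => rw [← repr_sum_counit_right_smul_left ra]
    rw [map_sum]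
    exact Finset.sum_congr rfl fun i _ => by rw [map_smul]
  rw [hsb, hsa, Finset.sum_mul_sum, Finset.sum_comm]
  refine Finset.sum_congr rfl fun i _ => Finset.sum_congr rfl fun j _ => ?_
  rw [smul_mul_smul_comm, mul_comm]

lemma counit_antipode' (a : A) :
    counit (R := R) (antipode (R := R) a) = counit (R := R) a := by
  have h := repr_sum_counit_right_smul_left (ℛ R a)
  set r := ℛ R a
  have h2 : counit (R := R) (antipode (R := R) a)
      = ∑ i ∈ r.index, counit (R := R) (antipode (R := R) (r.left i) * r.right i) := by
    conv_lhs => rw [← h]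
    rw [map_sum, map_sum]
    refine Finset.sum_congr rfl fun i _ => ?_
    rw [map_smul, map_smul, Bialgebra.counit_mul, smul_eq_mul]
    ring
  rw [h2, ← map_sum, sum_antipode_mul_eq_smul, map_smul, Bialgebra.counit_one,
    smul_eq_mul, mul_one]

end Hopf

lemma exists_fin_rep {R M N : Type*} [CommSemiring R] [AddCommMonoid M] [AddCommMonoid N]
    [Module R M] [Module R N] (w : M ⊗[R] N) :
    ∃ (n : ℕ) (y : Fin n → M) (z : Fin n → N), w = ∑ i, y i ⊗ₜ[R] z i := by
  obtain ⟨sf, hsf⟩ := TensorProduct.exists_finset (R := R) w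
  refine ⟨sf.card, fun i => (sf.equivFin.symm i).1.1, fun i => (sf.equivFin.symm i).1.2, ?_⟩
  rw [hsf, ← Finset.sum_coe_sort sf (fun p => p.1 ⊗ₜ[R] p.2)]
  exact (Equiv.sum_comp sf.equivFin.symm (fun p => (p : M × N).1 ⊗ₜ[R] (p : M × N).2)).symm

open scoped InnerProductSpace

-- The paper's inner product `⟨u, v⟩` is linear in `u`; it equals Mathlib's `⟪v, u⟫_ℂ`.
set_option maxHeartbeats 4000000 in
theorem real_cocycle_generator_cond_negative
    {A : Type*} [Ring A] [HopfAlgebra ℂ A]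
    [StarRing A] [StarModule ℂ A]
    -- `A` is a Hopf *-algebra:
    (hΔstar : ∀ (x : A) (m : ℕ) (y z : Fin m → A),
      Coalgebra.comul (R := ℂ) x = ∑ i, y i ⊗ₜ[ℂ] z i →
      Coalgebra.comul (R := ℂ) (star x) = ∑ i, star (y i) ⊗ₜ[ℂ] star (z i))
    (hεstar : ∀ x : A,
      Coalgebra.counit (R := ℂ) (star x) = starRingEnd ℂ (Coalgebra.counit (R := ℂ) x))
    (hSstar : ∀ x : A, antipode (R := ℂ) (star (antipode (R := ℂ) (star x))) = x)
    {H : Type*} [NormedAddCommGroup H] [InnerProductSpace ℂ H] [CompleteSpace H]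
    (π : A →⋆ₐ[ℂ] (H →L[ℂ] H))
    (c : A →ₗ[ℂ] H)
    (hc : ∀ x y : A, c (x * y) = π x (c y) + Coalgebra.counit (R := ℂ) y • c x)
    -- `c` is a real cocycle: `⟨c(S(y*)), c((Sx)*)⟩ = ⟨c(x), c(y)⟩` for all `x, y ∈ A`
    (hreal : ∀ x y : A,
      ⟪c (star (antipode (R := ℂ) x)), c (antipode (R := ℂ) (star y))⟫_ℂ = ⟪c y, c x⟫_ℂ) :
    c 1 = 0 ∧
      ∀ x : A, Coalgebra.counit (R := ℂ) x = 0 →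
      ∀ (m : ℕ) (p q : Fin m → A),
        Coalgebra.comul (R := ℂ) (star x * x) = ∑ j, p j ⊗ₜ[ℂ] q j →
        ∑ j, ⟪c (antipode (R := ℂ) (star (q j))), c (p j)⟫_ℂ = -2 * (‖c x‖ ^ 2 : ℝ) := by
  have hc1 : c 1 = 0 := by
    have h := hc 1 1
    have h2 : c 1 = c 1 + c 1 := by
      rw [mul_one, Bialgebra.counit_one, one_smul, map_one π,
        ContinuousLinearMap.one_apply] at h
      exact h
    exact left_eq_add.mp h2
  refine ⟨hc1, ?_⟩
  intro x hx m p q hpq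
  obtain ⟨n, y, z, hyz⟩ := exists_fin_rep (R := ℂ) (Coalgebra.comul (R := ℂ) x)
  have hstar := hΔstar x n y z hyz
  have rx : Coalgebra.Repr ℂ x (Fin n) := ⟨Finset.univ, y, z, hyz.symm⟩
  -- basic facts
  have fa : ∑ i : Fin n, Coalgebra.counit (R := ℂ) (z i) • y i = x := by
    simpa using repr_sum_counit_right_smul_left (⟨Finset.univ, y, z, hyz.symm⟩ : Coalgebra.Repr ℂ x (Fin n))
  have fb : ∑ i : Fin n, Coalgebra.counit (R := ℂ) (y i) • z i = x := by
    simpa using repr_sum_counit_left_smul_right (⟨Finset.univ, y, z, hyz.symm⟩ : Coalgebra.Repr ℂ x (Fin n))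
  have fc : ∑ i : Fin n, y i * antipode (R := ℂ) (z i) = 0 := by
    have := HopfAlgebra.sum_mul_antipode_eq_smul (R := ℂ)
      (⟨Finset.univ, y, z, hyz.symm⟩ : Coalgebra.Repr ℂ x (Fin n))
    simpa [hx] using this
  have fd : ∑ i : Fin n, antipode (R := ℂ) (star (y i)) * star (z i) = 0 := by
    have := HopfAlgebra.sum_antipode_mul_eq_smul (R := ℂ)
      (⟨Finset.univ, fun i => star (y i), fun i => star (z i), hstar.symm⟩ :
        Coalgebra.Repr ℂ (star x) (Fin n))
    simpa [hεstar, hx] using this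
  -- adjoint property
  have hadj : ∀ (a : A) (u v : H), ⟪u, π (star a) v⟫_ℂ = ⟪π a u, v⟫_ℂ := by
    intro a u v
    rw [map_star, ContinuousLinearMap.star_eq_adjoint, ContinuousLinearMap.adjoint_inner_right]
  -- rearranged cocycle identity
  have hc' : ∀ a b : A, π a (c b) = c (a * b) - Coalgebra.counit (R := ℂ) b • c a := by
    intro a b
    rw [hc a b]
    abel
  -- the pairing functional
  have hex : ∃ Ψ : A ⊗[ℂ] A →ₗ[ℂ] ℂ, ∀ p q : A,
      Ψ (p ⊗ₜ[ℂ] q) = ⟪c (antipode (R := ℂ) (star q)), c p⟫_ℂ := by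
    refine ⟨TensorProduct.lift (LinearMap.mk₂ ℂ
      (fun p q => ⟪c (antipode (R := ℂ) (star q)), c p⟫_ℂ) ?_ ?_ ?_ ?_), fun p q => ?_⟩
    · intro m₁ m₂ q; simp [inner_add_right]
    · intro a m q; simp [inner_smul_right]
    · intro m n₁ n₂; simp [star_add, inner_add_left]
    · intro a m q
      simp [star_smul, map_smul, inner_smul_left, Complex.conj_conj, mul_comm]
    · simp
  obtain ⟨Ψ, hΨ⟩ := hex
  -- reduce to the chosen representation
  have hgoal : ∑ j, ⟪c (antipode (R := ℂ) (star (q j))), c (p j)⟫_ℂ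
      = ∑ i : Fin n, ∑ k : Fin n,
          ⟪c (antipode (R := ℂ) (star (z k) * z i)), c (star (y i) * y k)⟫_ℂ := by
    have hBmul : Coalgebra.comul (R := ℂ) (star x * x)
        = ∑ i : Fin n, ∑ k : Fin n,
            (star (y i) * y k) ⊗ₜ[ℂ] (star (z i) * z k) := by
      rw [Bialgebra.comul_mul, hstar, hyz, Finset.sum_mul_sum]
      simp [Algebra.TensorProduct.tmul_mul_tmul]
    calc ∑ j, ⟪c (antipode (R := ℂ) (star (q j))), c (p j)⟫_ℂ
        = ∑ j, Ψ (p j ⊗ₜ[ℂ] q j) :=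
          Finset.sum_congr rfl fun j _ => (hΨ (p j) (q j)).symm
      _ = Ψ (∑ j, p j ⊗ₜ[ℂ] q j) := (map_sum Ψ _ _).symm
      _ = Ψ (Coalgebra.comul (R := ℂ) (star x * x)) := by rw [hpq]
      _ = ∑ i : Fin n, ∑ k : Fin n,
            Ψ ((star (y i) * y k) ⊗ₜ[ℂ] (star (z i) * z k)) := by
          rw [hBmul, map_sum]
          exact Finset.sum_congr rfl fun i _ => map_sum Ψ _ _
      _ = _ := by
          refine Finset.sum_congr rfl fun i _ => Finset.sum_congr rfl fun k _ => ?_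
          rw [hΨ, star_mul, star_star]
  rw [hgoal]
  -- expansion of each term into four pieces
  have expand : ∀ i k : Fin n,
      ⟪c (antipode (R := ℂ) (star (z k) * z i)), c (star (y i) * y k)⟫_ℂ
      = ⟪π (antipode (R := ℂ) (z i)) (c (antipode (R := ℂ) (star (z k)))),
          π (star (y i)) (c (y k))⟫_ℂ
        + Coalgebra.counit (R := ℂ) (z k) *
            ⟪c (antipode (R := ℂ) (z i)), π (star (y i)) (c (y k))⟫_ℂ
        + Coalgebra.counit (R := ℂ) (y k) *
            ⟪π (antipode (R := ℂ) (z i)) (c (antipode (R := ℂ) (star (z k)))),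
              c (star (y i))⟫_ℂ
        + Coalgebra.counit (R := ℂ) (y k) * (Coalgebra.counit (R := ℂ) (z k) *
            ⟪c (antipode (R := ℂ) (z i)), c (star (y i))⟫_ℂ) := by
    intro i k
    rw [antipode_mul_antidistrib', hc, hc, inner_add_left, inner_add_right, inner_add_right,
      inner_smul_left, inner_smul_left, inner_smul_right, inner_smul_right,
      counit_antipode', hεstar, Complex.conj_conj]
    ring
  rw [Finset.sum_congr rfl fun i _ => Finset.sum_congr rfl fun k _ => expand i k]
  simp only [Finset.sum_add_distrib]
  -- auxiliary scalar facts
  have hccount : ∑ k : Fin n,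
      Coalgebra.counit (R := ℂ) (y k) * Coalgebra.counit (R := ℂ) (z k) = 0 := by
    have h := congrArg (Coalgebra.counit (R := ℂ)) fb
    rw [map_sum] at h
    simp only [map_smul, smul_eq_mul] at h
    rw [hx] at h
    exact h
  have hcx : ∑ k : Fin n, Coalgebra.counit (R := ℂ) (z k) • c (y k) = c x := by
    have h := congrArg c fa
    rw [map_sum] at h
    simpa [map_smul] using h
  have hcx' : ∑ k : Fin n, Coalgebra.counit (R := ℂ) (y k) • c (z k) = c x := by
    have h := congrArg c fb
    rw [map_sum] at h
    simpa [map_smul] using h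
  -- Term 1
  have hT1 : ∑ i : Fin n, ∑ k : Fin n,
      ⟪π (antipode (R := ℂ) (z i)) (c (antipode (R := ℂ) (star (z k)))),
        π (star (y i)) (c (y k))⟫_ℂ = 0 := by
    rw [Finset.sum_comm]
    refine Finset.sum_eq_zero fun k _ => ?_
    have h1 : ∀ i : Fin n,
        ⟪π (antipode (R := ℂ) (z i)) (c (antipode (R := ℂ) (star (z k)))),
          π (star (y i)) (c (y k))⟫_ℂ
        = ⟪π (y i * antipode (R := ℂ) (z i)) (c (antipode (R := ℂ) (star (z k)))),
            c (y k)⟫_ℂ := by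
      intro i
      rw [hadj, map_mul, ContinuousLinearMap.mul_apply]
    rw [Finset.sum_congr rfl fun i _ => h1 i, ← sum_inner]
    have h2 : ∑ i : Fin n,
        π (y i * antipode (R := ℂ) (z i)) (c (antipode (R := ℂ) (star (z k)))) = 0 := by
      calc ∑ i : Fin n, π (y i * antipode (R := ℂ) (z i)) (c (antipode (R := ℂ) (star (z k))))
          = π (∑ i : Fin n, y i * antipode (R := ℂ) (z i))
              (c (antipode (R := ℂ) (star (z k)))) := by
            rw [map_sum, ContinuousLinearMap.sum_apply]
        _ = 0 := by rw [fc, map_zero, ContinuousLinearMap.zero_apply]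
    rw [h2, inner_zero_left]
  -- Term 2
  have hUker : ∑ i : Fin n, π (y i) (c (antipode (R := ℂ) (z i))) = - c x := by
    have h1 : ∀ i : Fin n, π (y i) (c (antipode (R := ℂ) (z i)))
        = c (y i * antipode (R := ℂ) (z i)) - Coalgebra.counit (R := ℂ) (z i) • c (y i) := by
      intro i
      rw [hc', counit_antipode']
    rw [Finset.sum_congr rfl fun i _ => h1 i, Finset.sum_sub_distrib, ← map_sum, fc, map_zero,
      hcx, zero_sub]
  have hU : ∑ i : Fin n, ∑ k : Fin n, Coalgebra.counit (R := ℂ) (z k) *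
      ⟪c (antipode (R := ℂ) (z i)), π (star (y i)) (c (y k))⟫_ℂ = -⟪c x, c x⟫_ℂ := by
    have h1 : ∀ i : Fin n, ∑ k : Fin n, Coalgebra.counit (R := ℂ) (z k) *
        ⟪c (antipode (R := ℂ) (z i)), π (star (y i)) (c (y k))⟫_ℂ
        = ⟪π (y i) (c (antipode (R := ℂ) (z i))), c x⟫_ℂ := by
      intro i
      calc ∑ k : Fin n, Coalgebra.counit (R := ℂ) (z k) *
            ⟪c (antipode (R := ℂ) (z i)), π (star (y i)) (c (y k))⟫_ℂ
          = ∑ k : Fin n, ⟪c (antipode (R := ℂ) (z i)),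
              π (star (y i)) (Coalgebra.counit (R := ℂ) (z k) • c (y k))⟫_ℂ := by
            refine Finset.sum_congr rfl fun k _ => ?_
            rw [map_smul, inner_smul_right]
        _ = ⟪c (antipode (R := ℂ) (z i)),
              π (star (y i)) (∑ k : Fin n, Coalgebra.counit (R := ℂ) (z k) • c (y k))⟫_ℂ := by
            rw [map_sum, inner_sum]
        _ = ⟪c (antipode (R := ℂ) (z i)), π (star (y i)) (c x)⟫_ℂ := by rw [hcx]
        _ = _ := hadj _ _ _
    rw [Finset.sum_congr rfl fun i _ => h1 i, ← sum_inner, hUker, inner_neg_left]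
  -- Term 4
  have hW : ∑ i : Fin n, ∑ k : Fin n, Coalgebra.counit (R := ℂ) (y k) *
      (Coalgebra.counit (R := ℂ) (z k) *
        ⟪c (antipode (R := ℂ) (z i)), c (star (y i))⟫_ℂ) = 0 := by
    refine Finset.sum_eq_zero fun i _ => ?_
    have h1 : ∑ k : Fin n, Coalgebra.counit (R := ℂ) (y k) *
        (Coalgebra.counit (R := ℂ) (z k) * ⟪c (antipode (R := ℂ) (z i)), c (star (y i))⟫_ℂ)
        = (∑ k : Fin n, Coalgebra.counit (R := ℂ) (y k) * Coalgebra.counit (R := ℂ) (z k)) *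
            ⟪c (antipode (R := ℂ) (z i)), c (star (y i))⟫_ℂ := by
      rw [Finset.sum_mul]
      exact Finset.sum_congr rfl fun k _ => by ring
    rw [h1, hccount, zero_mul]
  -- Term 3
  have hswap : ∀ i k : Fin n,
      ⟪c (antipode (R := ℂ) (star (z k) * z i)), c (star (y i))⟫_ℂ
      = ⟪c (star (antipode (R := ℂ) (star (y i)))), c (star (z i) * z k)⟫_ℂ := by
    intro i k
    have h1 := hreal (star (y i)) (antipode (R := ℂ) (star (z k) * z i))
    have h2 := hSstar (star (z i) * z k)
    rw [star_mul, star_star] at h2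
    rw [h2] at h1
    exact h1.symm
  have hVker : ∑ i : Fin n,
      π (z i) (c (star (antipode (R := ℂ) (star (y i))))) = - c x := by
    have h0 : ∑ i : Fin n, z i * star (antipode (R := ℂ) (star (y i))) = 0 := by
      have h := congrArg star fd
      rw [star_sum] at h
      simp only [star_mul, star_star, star_zero] at h
      exact h
    have h1 : ∀ i : Fin n, π (z i) (c (star (antipode (R := ℂ) (star (y i)))))
        = c (z i * star (antipode (R := ℂ) (star (y i))))
            - Coalgebra.counit (R := ℂ) (y i) • c (z i) := by
      intro i
      rw [hc']
      congr 2
      rw [hεstar, counit_antipode', hεstar, Complex.conj_conj]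
    rw [Finset.sum_congr rfl fun i _ => h1 i, Finset.sum_sub_distrib, ← map_sum, h0, map_zero,
      hcx', zero_sub]
  have hV : ∑ i : Fin n, ∑ k : Fin n, Coalgebra.counit (R := ℂ) (y k) *
      ⟪π (antipode (R := ℂ) (z i)) (c (antipode (R := ℂ) (star (z k)))),
        c (star (y i))⟫_ℂ = -⟪c x, c x⟫_ℂ := by
    have hsplit : ∀ i k : Fin n,
        Coalgebra.counit (R := ℂ) (y k) *
          ⟪π (antipode (R := ℂ) (z i)) (c (antipode (R := ℂ) (star (z k)))), c (star (y i))⟫_ℂ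
        = Coalgebra.counit (R := ℂ) (y k) *
            ⟪c (star (antipode (R := ℂ) (star (y i)))), c (star (z i) * z k)⟫_ℂ
          - Coalgebra.counit (R := ℂ) (y k) * (Coalgebra.counit (R := ℂ) (z k) *
              ⟪c (antipode (R := ℂ) (z i)), c (star (y i))⟫_ℂ) := by
      intro i k
      have e1 : π (antipode (R := ℂ) (z i)) (c (antipode (R := ℂ) (star (z k))))
          = c (antipode (R := ℂ) (star (z k) * z i))
              - Coalgebra.counit (R := ℂ) (antipode (R := ℂ) (star (z k)))
                  • c (antipode (R := ℂ) (z i)) := by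
        rw [hc', antipode_mul_antidistrib']
      rw [e1, inner_sub_left, inner_smul_left, counit_antipode', hεstar, Complex.conj_conj,
        hswap i k]
      ring
    rw [Finset.sum_congr rfl fun i _ => Finset.sum_congr rfl fun k _ => hsplit i k]
    simp only [Finset.sum_sub_distrib]
    have hZ : ∑ i : Fin n, ∑ k : Fin n, Coalgebra.counit (R := ℂ) (y k) *
        (Coalgebra.counit (R := ℂ) (z k) *
          ⟪c (antipode (R := ℂ) (z i)), c (star (y i))⟫_ℂ) = 0 := hW
    rw [hZ, sub_zero]
    have h1 : ∀ i : Fin n, ∑ k : Fin n, Coalgebra.counit (R := ℂ) (y k) *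
        ⟪c (star (antipode (R := ℂ) (star (y i)))), c (star (z i) * z k)⟫_ℂ
        = ⟪π (z i) (c (star (antipode (R := ℂ) (star (y i))))), c x⟫_ℂ := by
      intro i
      have e2 : ∑ k : Fin n, Coalgebra.counit (R := ℂ) (y k) • c (star (z i) * z k)
          = π (star (z i)) (c x) := by
        have e3 : ∑ k : Fin n, Coalgebra.counit (R := ℂ) (y k) • (star (z i) * z k)
            = star (z i) * x := by
          rw [← fb, Finset.mul_sum]
          exact Finset.sum_congr rfl fun k _ => (mul_smul_comm _ _ _).symm
        calc ∑ k : Fin n, Coalgebra.counit (R := ℂ) (y k) • c (star (z i) * z k)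
            = c (∑ k : Fin n, Coalgebra.counit (R := ℂ) (y k) • (star (z i) * z k)) := by
              rw [map_sum]
              exact Finset.sum_congr rfl fun k _ => (map_smul c _ _).symm
          _ = c (star (z i) * x) := by rw [e3]
          _ = π (star (z i)) (c x) := by rw [hc, hx, zero_smul, add_zero]
      calc ∑ k : Fin n, Coalgebra.counit (R := ℂ) (y k) *
            ⟪c (star (antipode (R := ℂ) (star (y i)))), c (star (z i) * z k)⟫_ℂ
          = ⟪c (star (antipode (R := ℂ) (star (y i)))),
              ∑ k : Fin n, Coalgebra.counit (R := ℂ) (y k) • c (star (z i) * z k)⟫_ℂ := by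
            rw [inner_sum]
            exact Finset.sum_congr rfl fun k _ => (inner_smul_right _ _ _).symm
        _ = ⟪c (star (antipode (R := ℂ) (star (y i)))), π (star (z i)) (c x)⟫_ℂ := by rw [e2]
        _ = _ := hadj _ _ _
    rw [Finset.sum_congr rfl fun i _ => h1 i, ← sum_inner, hVker, inner_neg_left]
  rw [hT1, hU, hV, hW, inner_self_eq_norm_sq_to_K,
    show (RCLike.ofReal : ℝ → ℂ) = Complex.ofReal from rfl]
  push_cast
  ring
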